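/- Let U, H be Hopf algebras and R : H ⊗ U → U ⊗ H a normal, multiplicative coalgebra map, with actions h ▷ u := ε_H(h^R)u^R and h ◁ u := ε_U(u^R)h^R. Then for all u ∈ U, h ∈ H: S_U(h ▷ u) = (h ◁ u₍₁₎) ▷ S_U(u₍₂₎) and S_H(h ◁ u) = S_H(h₍₁₎) ◁ (h₍₂₎ ▷ u). -/

import Mathlib

open TensorProduct

noncomputable section

variable {k : Type*} [Field k]
variable {U : Type*} [Ring U] [HopfAlgebra k U]
variable {H : Type*} [Ring H] [HopfAlgebra k H]

/-- The tensor product comultiplication on `A ⊗ B`: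
`a ⊗ b ↦ (a₍₁₎ ⊗ b₍₁₎) ⊗ (a₍₂₎ ⊗ b₍₂₎)`. -/
def comulTP (k A B : Type*) [Field k] [Ring A] [HopfAlgebra k A] [Ring B] [HopfAlgebra k B] :
    A ⊗[k] B →ₗ[k] (A ⊗[k] B) ⊗[k] (A ⊗[k] B) :=
  (TensorProduct.tensorTensorTensorComm k A A B B).toLinearMap ∘ₗ
    TensorProduct.map (Coalgebra.comul (R := k)) (Coalgebra.comul (R := k))

/-- The tensor product counit on `A ⊗ B`: `a ⊗ b ↦ ε(a)ε(b)`. -/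
def counitTP (k A B : Type*) [Field k] [Ring A] [HopfAlgebra k A] [Ring B] [HopfAlgebra k B] :
    A ⊗[k] B →ₗ[k] k :=
  (TensorProduct.lid k k).toLinearMap ∘ₗ
    TensorProduct.map (Coalgebra.counit (R := k)) (Coalgebra.counit (R := k))

/-- `R` is left normal: `R(h ⊗ 1_U) = 1_U ⊗ h`. -/
def LeftNormal (R : H ⊗[k] U →ₗ[k] U ⊗[k] H) : Prop :=
  ∀ h : H, R (h ⊗ₜ[k] (1 : U)) = (1 : U) ⊗ₜ[k] h

/-- `R` is right normal: `R(1_H ⊗ u) = u ⊗ 1_H`. -/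
def RightNormal (R : H ⊗[k] U →ₗ[k] U ⊗[k] H) : Prop :=
  ∀ u : U, R ((1 : H) ⊗ₜ[k] u) = u ⊗ₜ[k] (1 : H)

/-- `R` is left multiplicative: `u^R ⊗ (hh')^R = (u^R)^r ⊗ h^r(h')^R`,
as an equality of linear maps `(H ⊗ H) ⊗ U → U ⊗ H`. -/
def LeftMult (R : H ⊗[k] U →ₗ[k] U ⊗[k] H) : Prop :=
  R ∘ₗ TensorProduct.map (LinearMap.mul' k H) (LinearMap.id : U →ₗ[k] U) =
    TensorProduct.map (LinearMap.id : U →ₗ[k] U) (LinearMap.mul' k H) ∘ₗ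
      (TensorProduct.assoc k U H H).toLinearMap ∘ₗ
      TensorProduct.map R (LinearMap.id : H →ₗ[k] H) ∘ₗ
      (TensorProduct.assoc k H U H).symm.toLinearMap ∘ₗ
      TensorProduct.map (LinearMap.id : H →ₗ[k] H) R ∘ₗ
      (TensorProduct.assoc k H H U).toLinearMap

/-- `R` is right multiplicative: `(uu')^R ⊗ h^R = u^R(u')^r ⊗ (h^R)^r`,
as an equality of linear maps `H ⊗ (U ⊗ U) → U ⊗ H`. -/
def RightMult (R : H ⊗[k] U →ₗ[k] U ⊗[k] H) : Prop :=
  R ∘ₗ TensorProduct.map (LinearMap.id : H →ₗ[k] H) (LinearMap.mul' k U) =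
    TensorProduct.map (LinearMap.mul' k U) (LinearMap.id : H →ₗ[k] H) ∘ₗ
      (TensorProduct.assoc k U U H).symm.toLinearMap ∘ₗ
      TensorProduct.map (LinearMap.id : U →ₗ[k] U) R ∘ₗ
      (TensorProduct.assoc k U H U).toLinearMap ∘ₗ
      TensorProduct.map R (LinearMap.id : U →ₗ[k] U) ∘ₗ
      (TensorProduct.assoc k H U U).symm.toLinearMap

/-- `R` is a coalgebra map for the tensor product coalgebra structures. -/
def IsCoalgMap (R : H ⊗[k] U →ₗ[k] U ⊗[k] H) : Prop :=
  counitTP k U H ∘ₗ R = counitTP k H U ∧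
    comulTP k U H ∘ₗ R = TensorProduct.map R R ∘ₗ comulTP k H U

/-- The left action `h ⊗ u ↦ h ▷ u = ε_H(h^R)u^R`, as a linear map `H ⊗ U → U`. -/
def lact (R : H ⊗[k] U →ₗ[k] U ⊗[k] H) : H ⊗[k] U →ₗ[k] U :=
  (TensorProduct.rid k U).toLinearMap ∘ₗ
    TensorProduct.map (LinearMap.id : U →ₗ[k] U) (Coalgebra.counit (R := k)) ∘ₗ R

/-- The right action `h ⊗ u ↦ h ◁ u = ε_U(u^R)h^R`, as a linear map `H ⊗ U → H`. -/
def ract (R : H ⊗[k] U →ₗ[k] U ⊗[k] H) : H ⊗[k] U →ₗ[k] H :=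
  (TensorProduct.lid k H).toLinearMap ∘ₗ
    TensorProduct.map (Coalgebra.counit (R := k)) (LinearMap.id : H →ₗ[k] H) ∘ₗ R

set_option synthInstance.maxHeartbeats 400000
set_option maxHeartbeats 1000000

section AuxProofs

open Coalgebra LinearMap HopfAlgebra

variable {A B : Type*}

/-! ### Generic coalgebra helper lemmas -/

theorem aux_sum_counit_smul [AddCommMonoid A] [Module k A] [Coalgebra k A] {a : A}
    (r : Coalgebra.Repr k a (A × A)) :
    ∑ i ∈ r.index, Coalgebra.counit (R := k) (r.left i) • r.right i = a := by
  calc ∑ i ∈ r.index, Coalgebra.counit (R := k) (r.left i) • r.right i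
      = TensorProduct.lid k A
          (∑ i ∈ r.index, Coalgebra.counit (R := k) (r.left i) ⊗ₜ[k] r.right i) := by
        rw [map_sum]; simp
    _ = a := by rw [Coalgebra.sum_counit_tmul_eq r]; simp

theorem aux_sum_smul_counit [AddCommMonoid A] [Module k A] [Coalgebra k A] {a : A}
    (r : Coalgebra.Repr k a (A × A)) :
    ∑ i ∈ r.index, Coalgebra.counit (R := k) (r.right i) • r.left i = a := by
  calc ∑ i ∈ r.index, Coalgebra.counit (R := k) (r.right i) • r.left i
      = TensorProduct.rid k A
          (∑ i ∈ r.index, r.left i ⊗ₜ[k] Coalgebra.counit (R := k) (r.right i)) := by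
        rw [map_sum]; simp
    _ = a := by rw [Coalgebra.sum_tmul_counit_eq r]; simp

theorem aux_sum_counit_mul_counit [AddCommMonoid A] [Module k A] [Coalgebra k A] {a : A}
    (r : Coalgebra.Repr k a (A × A)) :
    ∑ i ∈ r.index,
      Coalgebra.counit (R := k) (r.left i) * Coalgebra.counit (R := k) (r.right i)
      = Coalgebra.counit (R := k) a := by
  have := congrArg (Coalgebra.counit (R := k)) (aux_sum_counit_smul r)
  simpa [map_sum, smul_eq_mul] using this

/-! ### `comulTP` and `counitTP` on pure tensors -/

theorem comulTP_tmul [Ring A] [HopfAlgebra k A] [Ring B] [HopfAlgebra k B]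
    (a : A) (b : B) (ra : Coalgebra.Repr k a (A × A)) (rb : Coalgebra.Repr k b (B × B)) :
    comulTP k A B (a ⊗ₜ[k] b) =
      ∑ i ∈ ra.index, ∑ j ∈ rb.index,
        (ra.left i ⊗ₜ[k] rb.left j) ⊗ₜ[k] (ra.right i ⊗ₜ[k] rb.right j) := by
  simp only [comulTP, coe_comp, Function.comp_apply, TensorProduct.map_tmul]
  rw [← ra.eq, ← rb.eq, TensorProduct.sum_tmul]
  rw [map_sum]
  refine Finset.sum_congr rfl fun i _ => ?_
  rw [TensorProduct.tmul_sum, map_sum]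
  refine Finset.sum_congr rfl fun j _ => ?_
  simp

theorem counitTP_tmul [Ring A] [HopfAlgebra k A] [Ring B] [HopfAlgebra k B]
    (a : A) (b : B) :
    counitTP k A B (a ⊗ₜ[k] b) =
      Coalgebra.counit (R := k) a * Coalgebra.counit (R := k) b := by
  simp [counitTP, smul_eq_mul]

/-! ### The two "half-counit" maps `U ⊗ H → U` and `U ⊗ H → H` -/

/-- `u ⊗ h ↦ ε(h) • u`. -/
def laM : U ⊗[k] H →ₗ[k] U :=
  (TensorProduct.rid k U).toLinearMap ∘ₗ
    TensorProduct.map (LinearMap.id : U →ₗ[k] U) (Coalgebra.counit (R := k))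

/-- `u ⊗ h ↦ ε(u) • h`. -/
def raM : U ⊗[k] H →ₗ[k] H :=
  (TensorProduct.lid k H).toLinearMap ∘ₗ
    TensorProduct.map (Coalgebra.counit (R := k)) (LinearMap.id : H →ₗ[k] H)

@[simp] theorem laM_tmul (u : U) (h : H) :
    laM (u ⊗ₜ[k] h) = Coalgebra.counit (R := k) h • u := by
  simp [laM]

@[simp] theorem raM_tmul (u : U) (h : H) :
    raM (u ⊗ₜ[k] h) = Coalgebra.counit (R := k) u • h := by
  simp [raM]

theorem lact_eq_laM (R : H ⊗[k] U →ₗ[k] U ⊗[k] H) (x : H ⊗[k] U) :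
    lact R x = laM (R x) := rfl

theorem ract_eq_raM (R : H ⊗[k] U →ₗ[k] U ⊗[k] H) (x : H ⊗[k] U) :
    ract R x = raM (R x) := rfl

theorem mapLaRa_comulTP (w : U ⊗[k] H) :
    TensorProduct.map (laM (k := k) (U := U) (H := H)) raM (comulTP k U H w) = w := by
  induction w using TensorProduct.induction_on with
  | zero => simp
  | add x y hx hy => simp only [map_add, hx, hy]
  | tmul u h =>
    rw [comulTP_tmul u h (ℛ k u) (ℛ k h)]
    simp only [map_sum, TensorProduct.map_tmul, laM_tmul, raM_tmul]
    calc ∑ i ∈ (ℛ k u).index, ∑ j ∈ (ℛ k h).index,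
          (Coalgebra.counit (R := k) ((ℛ k h).left j) • (ℛ k u).left i) ⊗ₜ[k]
            (Coalgebra.counit (R := k) ((ℛ k u).right i) • (ℛ k h).right j)
        = ∑ i ∈ (ℛ k u).index,
            (Coalgebra.counit (R := k) ((ℛ k u).right i) • (ℛ k u).left i) ⊗ₜ[k]
              (∑ j ∈ (ℛ k h).index,
                Coalgebra.counit (R := k) ((ℛ k h).left j) • (ℛ k h).right j) := by
          refine Finset.sum_congr rfl fun i _ => ?_
          rw [TensorProduct.tmul_sum]
          refine Finset.sum_congr rfl fun j _ => ?_
          simp only [TensorProduct.smul_tmul, TensorProduct.tmul_smul]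
          rw [smul_comm]
      _ = u ⊗ₜ[k] h := by
          rw [aux_sum_counit_smul (ℛ k h), ← TensorProduct.sum_tmul,
            aux_sum_smul_counit (ℛ k u)]

/-- `R` in terms of the two actions: `R(h ⊗ u) = (h₁ ▷ u₁) ⊗ (h₂ ◁ u₂)`. -/
theorem E1e (R : H ⊗[k] U →ₗ[k] U ⊗[k] H) (hcm : IsCoalgMap R) (h : H) (u : U)
    (rh : Coalgebra.Repr k h (H × H)) (ru : Coalgebra.Repr k u (U × U)) :
    R (h ⊗ₜ[k] u) =
      ∑ i ∈ rh.index, ∑ j ∈ ru.index,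
        lact R (rh.left i ⊗ₜ[k] ru.left j) ⊗ₜ[k] ract R (rh.right i ⊗ₜ[k] ru.right j) := by
  have h2 := congrArg (TensorProduct.map (laM (k := k) (U := U) (H := H)) raM)
    (LinearMap.congr_fun hcm.2 (h ⊗ₜ[k] u))
  simp only [coe_comp, Function.comp_apply] at h2
  rw [mapLaRa_comulTP] at h2
  rw [h2, comulTP_tmul h u rh ru]
  simp only [map_sum, TensorProduct.map_tmul, ← lact_eq_laM, ← ract_eq_raM]

theorem laM_mul_aux (a : U) (w : U ⊗[k] H) :
    laM (TensorProduct.map (LinearMap.mul' k U) (LinearMap.id : H →ₗ[k] H)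
      ((TensorProduct.assoc k U U H).symm (a ⊗ₜ[k] w))) = a * laM w := by
  induction w using TensorProduct.induction_on with
  | zero => simp
  | add x y hx hy => simp only [TensorProduct.tmul_add, map_add, hx, hy, mul_add]
  | tmul b c => simp [mul_smul_comm]

theorem raM_mul_aux (w : U ⊗[k] H) (b : H) :
    raM (TensorProduct.map (LinearMap.id : U →ₗ[k] U) (LinearMap.mul' k H)
      ((TensorProduct.assoc k U H H) (w ⊗ₜ[k] b))) = raM w * b := by
  induction w using TensorProduct.induction_on with
  | zero => simp
  | add x y hx hy => simp only [TensorProduct.add_tmul, map_add, hx, hy, add_mul]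
  | tmul x c => simp [smul_mul_assoc]

/-- Matched-pair identity: `h ▷ (u v) = (h₁ ▷ u₁)((h₂ ◁ u₂) ▷ v)`. -/
theorem M1e (R : H ⊗[k] U →ₗ[k] U ⊗[k] H) (hrm : RightMult R) (hcm : IsCoalgMap R)
    (h : H) (u v : U) (rh : Coalgebra.Repr k h (H × H)) (ru : Coalgebra.Repr k u (U × U)) :
    lact R (h ⊗ₜ[k] (u * v)) =
      ∑ i ∈ rh.index, ∑ j ∈ ru.index,
        lact R (rh.left i ⊗ₜ[k] ru.left j) *
          lact R (ract R (rh.right i ⊗ₜ[k] ru.right j) ⊗ₜ[k] v) := by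
  have h0 := congrArg laM (LinearMap.congr_fun hrm (h ⊗ₜ[k] (u ⊗ₜ[k] v)))
  simp only [coe_comp, Function.comp_apply, TensorProduct.map_tmul, mul'_apply,
    LinearMap.id_coe, id_eq, LinearEquiv.coe_coe, TensorProduct.assoc_symm_tmul] at h0
  rw [E1e R hcm h u rh ru] at h0
  simp only [TensorProduct.sum_tmul, map_sum, LinearEquiv.coe_coe,
    TensorProduct.assoc_tmul, TensorProduct.map_tmul, LinearMap.id_coe, id_eq,
    laM_mul_aux, ← lact_eq_laM] at h0
  exact h0

/-- Matched-pair identity: `(g h) ◁ u = (g ◁ (h₁ ▷ u₁))(h₂ ◁ u₂)`. -/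
theorem M2e (R : H ⊗[k] U →ₗ[k] U ⊗[k] H) (hlm : LeftMult R) (hcm : IsCoalgMap R)
    (g h : H) (u : U) (rh : Coalgebra.Repr k h (H × H)) (ru : Coalgebra.Repr k u (U × U)) :
    ract R ((g * h) ⊗ₜ[k] u) =
      ∑ i ∈ rh.index, ∑ j ∈ ru.index,
        ract R (g ⊗ₜ[k] lact R (rh.left i ⊗ₜ[k] ru.left j)) *
          ract R (rh.right i ⊗ₜ[k] ru.right j) := by
  have h0 := congrArg raM (LinearMap.congr_fun hlm ((g ⊗ₜ[k] h) ⊗ₜ[k] u))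
  simp only [coe_comp, Function.comp_apply, TensorProduct.map_tmul, mul'_apply,
    LinearMap.id_coe, id_eq, LinearEquiv.coe_coe, TensorProduct.assoc_tmul] at h0
  rw [E1e R hcm h u rh ru] at h0
  simp only [TensorProduct.tmul_sum, map_sum, LinearEquiv.coe_coe,
    TensorProduct.assoc_symm_tmul, TensorProduct.map_tmul, LinearMap.id_coe, id_eq,
    raM_mul_aux, ← ract_eq_raM] at h0
  exact h0

theorem comul_laM (w : U ⊗[k] H) :
    Coalgebra.comul (R := k) (laM w) =
      TensorProduct.map laM laM (comulTP k U H w) := by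
  induction w using TensorProduct.induction_on with
  | zero => simp
  | add x y hx hy => simp only [map_add, hx, hy]
  | tmul u h =>
    rw [comulTP_tmul u h (ℛ k u) (ℛ k h), laM_tmul, map_smul, map_sum]
    simp only [map_sum]
    rw [Finset.sum_comm]
    refine Eq.symm ?_
    calc ∑ j ∈ (ℛ k h).index, ∑ i ∈ (ℛ k u).index,
          TensorProduct.map laM laM
            (((ℛ k u).left i ⊗ₜ[k] (ℛ k h).left j) ⊗ₜ[k]
              ((ℛ k u).right i ⊗ₜ[k] (ℛ k h).right j))
        = ∑ j ∈ (ℛ k h).index,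
            (Coalgebra.counit (R := k) ((ℛ k h).left j) *
              Coalgebra.counit (R := k) ((ℛ k h).right j)) •
              Coalgebra.comul (R := k) u := by
          refine Finset.sum_congr rfl fun j _ => ?_
          calc ∑ i ∈ (ℛ k u).index,
                TensorProduct.map laM laM
                  (((ℛ k u).left i ⊗ₜ[k] (ℛ k h).left j) ⊗ₜ[k]
                    ((ℛ k u).right i ⊗ₜ[k] (ℛ k h).right j))
              = ∑ i ∈ (ℛ k u).index,
                  (Coalgebra.counit (R := k) ((ℛ k h).left j) *
                    Coalgebra.counit (R := k) ((ℛ k h).right j)) •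
                    ((ℛ k u).left i ⊗ₜ[k] (ℛ k u).right i) := by
                refine Finset.sum_congr rfl fun i _ => ?_
                simp [TensorProduct.smul_tmul, TensorProduct.tmul_smul, smul_smul, mul_comm]
            _ = (Coalgebra.counit (R := k) ((ℛ k h).left j) *
                  Coalgebra.counit (R := k) ((ℛ k h).right j)) •
                  Coalgebra.comul (R := k) u := by
                rw [← Finset.smul_sum, (ℛ k u).eq]
      _ = Coalgebra.counit (R := k) h • Coalgebra.comul (R := k) u := by
          rw [← Finset.sum_smul, aux_sum_counit_mul_counit]

theorem comul_raM (w : U ⊗[k] H) :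
    Coalgebra.comul (R := k) (raM w) =
      TensorProduct.map raM raM (comulTP k U H w) := by
  induction w using TensorProduct.induction_on with
  | zero => simp
  | add x y hx hy => simp only [map_add, hx, hy]
  | tmul u h =>
    rw [comulTP_tmul u h (ℛ k u) (ℛ k h), raM_tmul, map_smul, map_sum]
    simp only [map_sum]
    refine Eq.symm ?_
    calc ∑ i ∈ (ℛ k u).index, ∑ j ∈ (ℛ k h).index,
          TensorProduct.map raM raM
            (((ℛ k u).left i ⊗ₜ[k] (ℛ k h).left j) ⊗ₜ[k]
              ((ℛ k u).right i ⊗ₜ[k] (ℛ k h).right j))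
        = ∑ i ∈ (ℛ k u).index,
            (Coalgebra.counit (R := k) ((ℛ k u).left i) *
              Coalgebra.counit (R := k) ((ℛ k u).right i)) •
              Coalgebra.comul (R := k) h := by
          refine Finset.sum_congr rfl fun i _ => ?_
          calc ∑ j ∈ (ℛ k h).index,
                TensorProduct.map raM raM
                  (((ℛ k u).left i ⊗ₜ[k] (ℛ k h).left j) ⊗ₜ[k]
                    ((ℛ k u).right i ⊗ₜ[k] (ℛ k h).right j))
              = ∑ j ∈ (ℛ k h).index,
                  (Coalgebra.counit (R := k) ((ℛ k u).left i) *
                    Coalgebra.counit (R := k) ((ℛ k u).right i)) •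
                    ((ℛ k h).left j ⊗ₜ[k] (ℛ k h).right j) := by
                refine Finset.sum_congr rfl fun j _ => ?_
                simp [TensorProduct.smul_tmul, TensorProduct.tmul_smul, smul_smul, mul_comm]
            _ = _ := by rw [← Finset.smul_sum, (ℛ k h).eq]
      _ = Coalgebra.counit (R := k) u • Coalgebra.comul (R := k) h := by
          rw [← Finset.sum_smul, aux_sum_counit_mul_counit]

theorem counit_laM (w : U ⊗[k] H) :
    Coalgebra.counit (R := k) (laM w) = counitTP k U H w := by
  induction w using TensorProduct.induction_on with
  | zero => simp
  | add x y hx hy => simp only [map_add, hx, hy]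
  | tmul u h => rw [laM_tmul, map_smul, counitTP_tmul, smul_eq_mul, mul_comm]

theorem counit_raM (w : U ⊗[k] H) :
    Coalgebra.counit (R := k) (raM w) = counitTP k U H w := by
  induction w using TensorProduct.induction_on with
  | zero => simp
  | add x y hx hy => simp only [map_add, hx, hy]
  | tmul u h => rw [raM_tmul, map_smul, counitTP_tmul, smul_eq_mul]

theorem comul_lact (R : H ⊗[k] U →ₗ[k] U ⊗[k] H) (hcm : IsCoalgMap R) :
    Coalgebra.comul (R := k) ∘ₗ lact R =
      TensorProduct.map (lact R) (lact R) ∘ₗ comulTP k H U := by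
  apply LinearMap.ext; intro x
  have h1 := LinearMap.congr_fun hcm.2 x
  simp only [coe_comp, Function.comp_apply] at h1 ⊢
  rw [lact_eq_laM, comul_laM, h1]
  rw [← LinearMap.comp_apply, ← TensorProduct.map_comp]
  rfl

theorem comul_ract (R : H ⊗[k] U →ₗ[k] U ⊗[k] H) (hcm : IsCoalgMap R) :
    Coalgebra.comul (R := k) ∘ₗ ract R =
      TensorProduct.map (ract R) (ract R) ∘ₗ comulTP k H U := by
  apply LinearMap.ext; intro x
  have h1 := LinearMap.congr_fun hcm.2 x
  simp only [coe_comp, Function.comp_apply] at h1 ⊢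
  rw [ract_eq_raM, comul_raM, h1]
  rw [← LinearMap.comp_apply, ← TensorProduct.map_comp]
  rfl

theorem counit_lact (R : H ⊗[k] U →ₗ[k] U ⊗[k] H) (hcm : IsCoalgMap R) :
    Coalgebra.counit (R := k) ∘ₗ lact R = counitTP k H U := by
  apply LinearMap.ext; intro x
  have h1 := LinearMap.congr_fun hcm.1 x
  simp only [coe_comp, Function.comp_apply] at h1 ⊢
  rw [lact_eq_laM, counit_laM, h1]

theorem counit_ract (R : H ⊗[k] U →ₗ[k] U ⊗[k] H) (hcm : IsCoalgMap R) :
    Coalgebra.counit (R := k) ∘ₗ ract R = counitTP k H U := by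
  apply LinearMap.ext; intro x
  have h1 := LinearMap.congr_fun hcm.1 x
  simp only [coe_comp, Function.comp_apply] at h1 ⊢
  rw [ract_eq_raM, counit_raM, h1]

/-! ### Convolution algebra on linear maps `H ⊗ U → A` -/

variable [Ring A] [Algebra k A]

/-- Convolution product. -/
def conv (f g : H ⊗[k] U →ₗ[k] A) : H ⊗[k] U →ₗ[k] A :=
  LinearMap.mul' k A ∘ₗ TensorProduct.map f g ∘ₗ comulTP k H U

/-- Convolution unit. -/
def cone : H ⊗[k] U →ₗ[k] A :=
  Algebra.linearMap k A ∘ₗ counitTP k H U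

theorem conv_tmul (f g : H ⊗[k] U →ₗ[k] A) (h : H) (u : U)
    (rh : Coalgebra.Repr k h (H × H)) (ru : Coalgebra.Repr k u (U × U)) :
    conv f g (h ⊗ₜ[k] u) =
      ∑ i ∈ rh.index, ∑ j ∈ ru.index,
        f (rh.left i ⊗ₜ[k] ru.left j) * g (rh.right i ⊗ₜ[k] ru.right j) := by
  simp only [conv, coe_comp, Function.comp_apply]
  rw [comulTP_tmul h u rh ru]
  simp only [map_sum, TensorProduct.map_tmul, mul'_apply]

theorem cone_tmul (h : H) (u : U) :
    cone (A := A) (h ⊗ₜ[k] u) =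
      algebraMap k A (Coalgebra.counit (R := k) h * Coalgebra.counit (R := k) u) := by
  simp only [cone, coe_comp, Function.comp_apply, counitTP_tmul, Algebra.linearMap_apply]

theorem sum_counit_counit_smul_apply {M : Type*} [AddCommMonoid M] [Module k M]
    (f : H ⊗[k] U →ₗ[k] M) (h : H) (u : U)
    (rh : Coalgebra.Repr k h (H × H)) (ru : Coalgebra.Repr k u (U × U)) :
    ∑ i ∈ rh.index, ∑ j ∈ ru.index,
      (Coalgebra.counit (R := k) (rh.left i) * Coalgebra.counit (R := k) (ru.left j)) •
        f (rh.right i ⊗ₜ[k] ru.right j) = f (h ⊗ₜ[k] u) := by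
  calc ∑ i ∈ rh.index, ∑ j ∈ ru.index,
        (Coalgebra.counit (R := k) (rh.left i) * Coalgebra.counit (R := k) (ru.left j)) •
          f (rh.right i ⊗ₜ[k] ru.right j)
      = ∑ i ∈ rh.index,
          Coalgebra.counit (R := k) (rh.left i) • f (rh.right i ⊗ₜ[k] u) := by
        refine Finset.sum_congr rfl fun i _ => ?_
        rw [show f (rh.right i ⊗ₜ[k] u) =
            f (rh.right i ⊗ₜ[k] ∑ j ∈ ru.index,
              Coalgebra.counit (R := k) (ru.left j) • ru.right j) by
          rw [aux_sum_counit_smul ru]]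
        rw [TensorProduct.tmul_sum, map_sum, Finset.smul_sum]
        refine Finset.sum_congr rfl fun j _ => ?_
        rw [TensorProduct.tmul_smul, map_smul, smul_smul]
    _ = f ((∑ i ∈ rh.index, Coalgebra.counit (R := k) (rh.left i) • rh.right i) ⊗ₜ[k] u) := by
        rw [TensorProduct.sum_tmul, map_sum]
        refine Finset.sum_congr rfl fun i _ => ?_
        rw [← map_smul, TensorProduct.smul_tmul']
    _ = f (h ⊗ₜ[k] u) := by rw [aux_sum_counit_smul rh]

theorem sum_smul_counit_counit_apply {M : Type*} [AddCommMonoid M] [Module k M]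
    (f : H ⊗[k] U →ₗ[k] M) (h : H) (u : U)
    (rh : Coalgebra.Repr k h (H × H)) (ru : Coalgebra.Repr k u (U × U)) :
    ∑ i ∈ rh.index, ∑ j ∈ ru.index,
      (Coalgebra.counit (R := k) (rh.right i) * Coalgebra.counit (R := k) (ru.right j)) •
        f (rh.left i ⊗ₜ[k] ru.left j) = f (h ⊗ₜ[k] u) := by
  calc ∑ i ∈ rh.index, ∑ j ∈ ru.index,
        (Coalgebra.counit (R := k) (rh.right i) * Coalgebra.counit (R := k) (ru.right j)) •
          f (rh.left i ⊗ₜ[k] ru.left j)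
      = ∑ i ∈ rh.index,
          Coalgebra.counit (R := k) (rh.right i) • f (rh.left i ⊗ₜ[k] u) := by
        refine Finset.sum_congr rfl fun i _ => ?_
        rw [show f (rh.left i ⊗ₜ[k] u) =
            f (rh.left i ⊗ₜ[k] ∑ j ∈ ru.index,
              Coalgebra.counit (R := k) (ru.right j) • ru.left j) by
          rw [aux_sum_smul_counit ru]]
        rw [TensorProduct.tmul_sum, map_sum, Finset.smul_sum]
        refine Finset.sum_congr rfl fun j _ => ?_
        rw [TensorProduct.tmul_smul, map_smul, smul_smul]
    _ = f ((∑ i ∈ rh.index, Coalgebra.counit (R := k) (rh.right i) • rh.left i) ⊗ₜ[k] u) := by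
        rw [TensorProduct.sum_tmul, map_sum]
        refine Finset.sum_congr rfl fun i _ => ?_
        rw [← map_smul, TensorProduct.smul_tmul']
    _ = f (h ⊗ₜ[k] u) := by rw [aux_sum_smul_counit rh]

theorem conv_one_left (f : H ⊗[k] U →ₗ[k] A) : conv cone f = f := by
  apply TensorProduct.ext'; intro h u
  rw [conv_tmul cone f h u (ℛ k h) (ℛ k u)]
  calc ∑ i ∈ (ℛ k h).index, ∑ j ∈ (ℛ k u).index,
        cone ((ℛ k h).left i ⊗ₜ[k] (ℛ k u).left j) *
          f ((ℛ k h).right i ⊗ₜ[k] (ℛ k u).right j)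
      = ∑ i ∈ (ℛ k h).index, ∑ j ∈ (ℛ k u).index,
          (Coalgebra.counit (R := k) ((ℛ k h).left i) *
            Coalgebra.counit (R := k) ((ℛ k u).left j)) •
            f ((ℛ k h).right i ⊗ₜ[k] (ℛ k u).right j) := by
        refine Finset.sum_congr rfl fun i _ => Finset.sum_congr rfl fun j _ => ?_
        rw [cone_tmul, ← Algebra.smul_def]
    _ = f (h ⊗ₜ[k] u) := sum_counit_counit_smul_apply f h u (ℛ k h) (ℛ k u)

theorem conv_one_right (f : H ⊗[k] U →ₗ[k] A) : conv f cone = f := by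
  apply TensorProduct.ext'; intro h u
  rw [conv_tmul f cone h u (ℛ k h) (ℛ k u)]
  calc ∑ i ∈ (ℛ k h).index, ∑ j ∈ (ℛ k u).index,
        f ((ℛ k h).left i ⊗ₜ[k] (ℛ k u).left j) *
          cone ((ℛ k h).right i ⊗ₜ[k] (ℛ k u).right j)
      = ∑ i ∈ (ℛ k h).index, ∑ j ∈ (ℛ k u).index,
          (Coalgebra.counit (R := k) ((ℛ k h).right i) *
            Coalgebra.counit (R := k) ((ℛ k u).right j)) •
            f ((ℛ k h).left i ⊗ₜ[k] (ℛ k u).left j) := by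
        refine Finset.sum_congr rfl fun i _ => Finset.sum_congr rfl fun j _ => ?_
        rw [cone_tmul, ← Algebra.commutes, ← Algebra.smul_def]
    _ = f (h ⊗ₜ[k] u) := sum_smul_counit_counit_apply f h u (ℛ k h) (ℛ k u)

/-- Auxiliary trilinear-evaluation map, left-nested version. -/
def Xil (f g e : H ⊗[k] U →ₗ[k] A) :
    ((H ⊗[k] H) ⊗[k] H) ⊗[k] ((U ⊗[k] U) ⊗[k] U) →ₗ[k] A :=
  LinearMap.mul' k A ∘ₗ
    TensorProduct.map
      (LinearMap.mul' k A ∘ₗ TensorProduct.map f g ∘ₗ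
        (TensorProduct.tensorTensorTensorComm k H H U U).toLinearMap)
      e ∘ₗ
    (TensorProduct.tensorTensorTensorComm k (H ⊗[k] H) H (U ⊗[k] U) U).toLinearMap

@[simp] theorem Xil_tmul (f g e : H ⊗[k] U →ₗ[k] A)
    (x1 x2 x3 : H) (y1 y2 y3 : U) :
    Xil f g e (((x1 ⊗ₜ[k] x2) ⊗ₜ[k] x3) ⊗ₜ[k] ((y1 ⊗ₜ[k] y2) ⊗ₜ[k] y3)) =
      f (x1 ⊗ₜ[k] y1) * g (x2 ⊗ₜ[k] y2) * e (x3 ⊗ₜ[k] y3) := by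
  simp [Xil]

/-- Auxiliary trilinear-evaluation map, right-nested version. -/
def Xir (f g e : H ⊗[k] U →ₗ[k] A) :
    (H ⊗[k] (H ⊗[k] H)) ⊗[k] (U ⊗[k] (U ⊗[k] U)) →ₗ[k] A :=
  LinearMap.mul' k A ∘ₗ
    TensorProduct.map f
      (LinearMap.mul' k A ∘ₗ TensorProduct.map g e ∘ₗ
        (TensorProduct.tensorTensorTensorComm k H H U U).toLinearMap) ∘ₗ
    (TensorProduct.tensorTensorTensorComm k H (H ⊗[k] H) U (U ⊗[k] U)).toLinearMap

@[simp] theorem Xir_tmul (f g e : H ⊗[k] U →ₗ[k] A)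
    (x1 x2 x3 : H) (y1 y2 y3 : U) :
    Xir f g e ((x1 ⊗ₜ[k] (x2 ⊗ₜ[k] x3)) ⊗ₜ[k] (y1 ⊗ₜ[k] (y2 ⊗ₜ[k] y3))) =
      f (x1 ⊗ₜ[k] y1) * (g (x2 ⊗ₜ[k] y2) * e (x3 ⊗ₜ[k] y3)) := by
  simp [Xir]

theorem Xi_assoc (f g e : H ⊗[k] U →ₗ[k] A) :
    Xil f g e = Xir f g e ∘ₗ
      TensorProduct.map (TensorProduct.assoc k H H H).toLinearMap
        (TensorProduct.assoc k U U U).toLinearMap := by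
  ext x1 x2 x3 y1 y2 y3
  simp [mul_assoc]

theorem rT_comul_eq {C : Type*} [AddCommMonoid C] [Module k C] [Coalgebra k C]
    (a : C) (ra : Coalgebra.Repr k a (C × C)) (ra1 : ∀ i : ra.ι, Coalgebra.Repr k (ra.left i) (C × C)) :
    (Coalgebra.comul (R := k)).rTensor C (Coalgebra.comul (R := k) a) =
      ∑ i ∈ ra.index, ∑ p ∈ (ra1 i).index,
        ((ra1 i).left p ⊗ₜ[k] (ra1 i).right p) ⊗ₜ[k] ra.right i := by
  rw [← ra.eq, map_sum]
  refine Finset.sum_congr rfl fun i _ => ?_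
  rw [rTensor_tmul, ← (ra1 i).eq, TensorProduct.sum_tmul]

theorem lT_comul_eq {C : Type*} [AddCommMonoid C] [Module k C] [Coalgebra k C]
    (a : C) (ra : Coalgebra.Repr k a (C × C)) (ra2 : ∀ i : ra.ι, Coalgebra.Repr k (ra.right i) (C × C)) :
    (Coalgebra.comul (R := k)).lTensor C (Coalgebra.comul (R := k) a) =
      ∑ i ∈ ra.index, ∑ p ∈ (ra2 i).index,
        ra.left i ⊗ₜ[k] ((ra2 i).left p ⊗ₜ[k] (ra2 i).right p) := by
  rw [← ra.eq, map_sum]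
  refine Finset.sum_congr rfl fun i _ => ?_
  rw [lTensor_tmul, ← (ra2 i).eq, TensorProduct.tmul_sum]

theorem conv_assoc (f g e : H ⊗[k] U →ₗ[k] A) :
    conv (conv f g) e = conv f (conv g e) := by
  apply TensorProduct.ext'; intro h u
  have L : conv (conv f g) e (h ⊗ₜ[k] u) =
      Xil f g e
        (((Coalgebra.comul (R := k)).rTensor H (Coalgebra.comul (R := k) h)) ⊗ₜ[k]
          ((Coalgebra.comul (R := k)).rTensor U (Coalgebra.comul (R := k) u))) := by
    rw [conv_tmul _ _ h u (ℛ k h) (ℛ k u),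
      rT_comul_eq h (ℛ k h) (fun i => ℛ k ((ℛ k h).left i)),
      rT_comul_eq u (ℛ k u) (fun j => ℛ k ((ℛ k u).left j))]
    simp only [TensorProduct.sum_tmul]
    simp only [TensorProduct.tmul_sum]
    simp only [map_sum, Xil_tmul]
    calc ∑ i ∈ (ℛ k h).index, ∑ j ∈ (ℛ k u).index,
          conv f g ((ℛ k h).left i ⊗ₜ[k] (ℛ k u).left j) *
            e ((ℛ k h).right i ⊗ₜ[k] (ℛ k u).right j)
        = ∑ i ∈ (ℛ k h).index, ∑ j ∈ (ℛ k u).index,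
            ∑ p ∈ (ℛ k ((ℛ k h).left i)).index, ∑ q ∈ (ℛ k ((ℛ k u).left j)).index,
              f ((ℛ k ((ℛ k h).left i)).left p ⊗ₜ[k] (ℛ k ((ℛ k u).left j)).left q) *
                g ((ℛ k ((ℛ k h).left i)).right p ⊗ₜ[k] (ℛ k ((ℛ k u).left j)).right q) *
                e ((ℛ k h).right i ⊗ₜ[k] (ℛ k u).right j) := by
          refine Finset.sum_congr rfl fun i _ => Finset.sum_congr rfl fun j _ => ?_
          rw [conv_tmul f g _ _ (ℛ k ((ℛ k h).left i)) (ℛ k ((ℛ k u).left j)),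
            Finset.sum_mul]
          exact Finset.sum_congr rfl fun p _ => by rw [Finset.sum_mul]
      _ = ∑ i ∈ (ℛ k h).index, ∑ p ∈ (ℛ k ((ℛ k h).left i)).index,
            ∑ j ∈ (ℛ k u).index, ∑ q ∈ (ℛ k ((ℛ k u).left j)).index,
              f ((ℛ k ((ℛ k h).left i)).left p ⊗ₜ[k] (ℛ k ((ℛ k u).left j)).left q) *
                g ((ℛ k ((ℛ k h).left i)).right p ⊗ₜ[k] (ℛ k ((ℛ k u).left j)).right q) *
                e ((ℛ k h).right i ⊗ₜ[k] (ℛ k u).right j) :=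
          Finset.sum_congr rfl fun i _ => Finset.sum_comm
  have Rr : conv f (conv g e) (h ⊗ₜ[k] u) =
      Xir f g e
        (((Coalgebra.comul (R := k)).lTensor H (Coalgebra.comul (R := k) h)) ⊗ₜ[k]
          ((Coalgebra.comul (R := k)).lTensor U (Coalgebra.comul (R := k) u))) := by
    rw [conv_tmul _ _ h u (ℛ k h) (ℛ k u),
      lT_comul_eq h (ℛ k h) (fun i => ℛ k ((ℛ k h).right i)),
      lT_comul_eq u (ℛ k u) (fun j => ℛ k ((ℛ k u).right j))]
    simp only [TensorProduct.sum_tmul]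
    simp only [TensorProduct.tmul_sum]
    simp only [map_sum, Xir_tmul]
    calc ∑ i ∈ (ℛ k h).index, ∑ j ∈ (ℛ k u).index,
          f ((ℛ k h).left i ⊗ₜ[k] (ℛ k u).left j) *
            conv g e ((ℛ k h).right i ⊗ₜ[k] (ℛ k u).right j)
        = ∑ i ∈ (ℛ k h).index, ∑ j ∈ (ℛ k u).index,
            ∑ p ∈ (ℛ k ((ℛ k h).right i)).index, ∑ q ∈ (ℛ k ((ℛ k u).right j)).index,
              f ((ℛ k h).left i ⊗ₜ[k] (ℛ k u).left j) *
                (g ((ℛ k ((ℛ k h).right i)).left p ⊗ₜ[k] (ℛ k ((ℛ k u).right j)).left q) *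
                  e ((ℛ k ((ℛ k h).right i)).right p ⊗ₜ[k] (ℛ k ((ℛ k u).right j)).right q)) := by
          refine Finset.sum_congr rfl fun i _ => Finset.sum_congr rfl fun j _ => ?_
          rw [conv_tmul g e _ _ (ℛ k ((ℛ k h).right i)) (ℛ k ((ℛ k u).right j)),
            Finset.mul_sum]
          exact Finset.sum_congr rfl fun p _ => by rw [Finset.mul_sum]
      _ = ∑ i ∈ (ℛ k h).index, ∑ p ∈ (ℛ k ((ℛ k h).right i)).index,
            ∑ j ∈ (ℛ k u).index, ∑ q ∈ (ℛ k ((ℛ k u).right j)).index,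
              f ((ℛ k h).left i ⊗ₜ[k] (ℛ k u).left j) *
                (g ((ℛ k ((ℛ k h).right i)).left p ⊗ₜ[k] (ℛ k ((ℛ k u).right j)).left q) *
                  e ((ℛ k ((ℛ k h).right i)).right p ⊗ₜ[k] (ℛ k ((ℛ k u).right j)).right q)) :=
          Finset.sum_congr rfl fun i _ => Finset.sum_comm
  rw [L, Rr, Xi_assoc]
  simp only [coe_comp, Function.comp_apply, TensorProduct.map_tmul, LinearEquiv.coe_coe]
  rw [Coalgebra.coassoc_apply, Coalgebra.coassoc_apply]

end AuxProofs

section AuxHopf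

open Coalgebra LinearMap HopfAlgebra

variable {A : Type*} [Ring A] [HopfAlgebra k A]

theorem conv_antipode_left (f : H ⊗[k] U →ₗ[k] A)
    (hc : Coalgebra.comul (R := k) ∘ₗ f = TensorProduct.map f f ∘ₗ comulTP k H U)
    (he : Coalgebra.counit (R := k) ∘ₗ f = counitTP k H U) :
    conv (HopfAlgebra.antipode (R := k) (A := A) ∘ₗ f) f = cone := by
  have hmap : TensorProduct.map (HopfAlgebra.antipode (R := k) (A := A) ∘ₗ f) f =
      (HopfAlgebra.antipode (R := k) (A := A)).rTensor A ∘ₗ TensorProduct.map f f := by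
    calc TensorProduct.map (HopfAlgebra.antipode (R := k) (A := A) ∘ₗ f) f
        = TensorProduct.map (HopfAlgebra.antipode (R := k) (A := A) ∘ₗ f)
            (LinearMap.id ∘ₗ f) := by rw [LinearMap.id_comp]
      _ = _ := TensorProduct.map_comp _ _ _ _
  apply LinearMap.ext; intro x
  have h1 := LinearMap.congr_fun hc x
  have h2 := LinearMap.congr_fun he x
  simp only [coe_comp, Function.comp_apply] at h1 h2
  calc conv (HopfAlgebra.antipode (R := k) (A := A) ∘ₗ f) f x
      = LinearMap.mul' k A ((HopfAlgebra.antipode (R := k) (A := A)).rTensor A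
          (TensorProduct.map f f (comulTP k H U x))) := by
        simp only [conv, coe_comp, Function.comp_apply, hmap]
    _ = LinearMap.mul' k A ((HopfAlgebra.antipode (R := k) (A := A)).rTensor A
          (Coalgebra.comul (f x))) := by rw [← h1]
    _ = algebraMap k A (Coalgebra.counit (f x)) :=
        HopfAlgebra.mul_antipode_rTensor_comul_apply (f x)
    _ = cone x := by rw [h2]; simp [cone]

theorem conv_antipode_right (f : H ⊗[k] U →ₗ[k] A)
    (hc : Coalgebra.comul (R := k) ∘ₗ f = TensorProduct.map f f ∘ₗ comulTP k H U)
    (he : Coalgebra.counit (R := k) ∘ₗ f = counitTP k H U) :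
    conv f (HopfAlgebra.antipode (R := k) (A := A) ∘ₗ f) = cone := by
  have hmap : TensorProduct.map f (HopfAlgebra.antipode (R := k) (A := A) ∘ₗ f) =
      (HopfAlgebra.antipode (R := k) (A := A)).lTensor A ∘ₗ TensorProduct.map f f := by
    calc TensorProduct.map f (HopfAlgebra.antipode (R := k) (A := A) ∘ₗ f)
        = TensorProduct.map (LinearMap.id ∘ₗ f)
            (HopfAlgebra.antipode (R := k) (A := A) ∘ₗ f) := by rw [LinearMap.id_comp]
      _ = _ := TensorProduct.map_comp _ _ _ _
  apply LinearMap.ext; intro x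
  have h1 := LinearMap.congr_fun hc x
  have h2 := LinearMap.congr_fun he x
  simp only [coe_comp, Function.comp_apply] at h1 h2
  calc conv f (HopfAlgebra.antipode (R := k) (A := A) ∘ₗ f) x
      = LinearMap.mul' k A ((HopfAlgebra.antipode (R := k) (A := A)).lTensor A
          (TensorProduct.map f f (comulTP k H U x))) := by
        simp only [conv, coe_comp, Function.comp_apply, hmap]
    _ = LinearMap.mul' k A ((HopfAlgebra.antipode (R := k) (A := A)).lTensor A
          (Coalgebra.comul (f x))) := by rw [← h1]
    _ = algebraMap k A (Coalgebra.counit (f x)) :=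
        HopfAlgebra.mul_antipode_lTensor_comul_apply (f x)
    _ = cone x := by rw [h2]; simp [cone]

end AuxHopf


section AuxFinal

open Coalgebra LinearMap HopfAlgebra

/-- The right-hand side of the first identity. -/
def T1 (R : H ⊗[k] U →ₗ[k] U ⊗[k] H) : H ⊗[k] U →ₗ[k] U :=
  lact R ∘ₗ
    TensorProduct.map (ract R) (HopfAlgebra.antipode (R := k) (A := U)) ∘ₗ
    (TensorProduct.assoc k H U U).symm.toLinearMap ∘ₗ
    TensorProduct.map (LinearMap.id : H →ₗ[k] H) (Coalgebra.comul (R := k))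

/-- The right-hand side of the second identity. -/
def G1 (R : H ⊗[k] U →ₗ[k] U ⊗[k] H) : H ⊗[k] U →ₗ[k] H :=
  ract R ∘ₗ
    TensorProduct.map (HopfAlgebra.antipode (R := k) (A := H)) (lact R) ∘ₗ
    (TensorProduct.assoc k H H U).toLinearMap ∘ₗ
    TensorProduct.map (Coalgebra.comul (R := k)) (LinearMap.id : U →ₗ[k] U)

theorem T1_tmul (R : H ⊗[k] U →ₗ[k] U ⊗[k] H) (h : H) (u : U) (ru : Coalgebra.Repr k u (U × U)) :
    T1 R (h ⊗ₜ[k] u) =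
      ∑ q ∈ ru.index,
        lact R (ract R (h ⊗ₜ[k] ru.left q) ⊗ₜ[k]
          HopfAlgebra.antipode (R := k) (A := U) (ru.right q)) := by
  simp only [T1, coe_comp, Function.comp_apply, TensorProduct.map_tmul, id_coe, id_eq]
  rw [← ru.eq]
  simp only [TensorProduct.tmul_sum, map_sum, LinearEquiv.coe_coe,
    TensorProduct.assoc_symm_tmul, TensorProduct.map_tmul]

theorem G1_tmul (R : H ⊗[k] U →ₗ[k] U ⊗[k] H) (h : H) (u : U) (rh : Coalgebra.Repr k h (H × H)) :
    G1 R (h ⊗ₜ[k] u) =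
      ∑ i ∈ rh.index,
        ract R (HopfAlgebra.antipode (R := k) (A := H) (rh.left i) ⊗ₜ[k]
          lact R (rh.right i ⊗ₜ[k] u)) := by
  simp only [G1, coe_comp, Function.comp_apply, TensorProduct.map_tmul, id_coe, id_eq]
  rw [← rh.eq]
  simp only [TensorProduct.sum_tmul, map_sum, LinearEquiv.coe_coe,
    TensorProduct.assoc_tmul, TensorProduct.map_tmul]

/-- Evaluation map for the first key identity. -/
def Phi (R : H ⊗[k] U →ₗ[k] U ⊗[k] H) :
    (H ⊗[k] H) ⊗[k] (U ⊗[k] (U ⊗[k] U)) →ₗ[k] U :=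
  LinearMap.mul' k U ∘ₗ
    TensorProduct.map (lact R)
      (lact R ∘ₗ
        TensorProduct.map (ract R) (HopfAlgebra.antipode (R := k) (A := U)) ∘ₗ
        (TensorProduct.assoc k H U U).symm.toLinearMap) ∘ₗ
    (TensorProduct.tensorTensorTensorComm k H H U (U ⊗[k] U)).toLinearMap

@[simp] theorem Phi_tmul (R : H ⊗[k] U →ₗ[k] U ⊗[k] H)
    (x1 x2 : H) (y1 y2 y3 : U) :
    Phi R ((x1 ⊗ₜ[k] x2) ⊗ₜ[k] (y1 ⊗ₜ[k] (y2 ⊗ₜ[k] y3))) =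
      lact R (x1 ⊗ₜ[k] y1) *
        lact R (ract R (x2 ⊗ₜ[k] y2) ⊗ₜ[k]
          HopfAlgebra.antipode (R := k) (A := U) y3) := by
  simp [Phi]

/-- Evaluation map for the second key identity. -/
def Phi2 (R : H ⊗[k] U →ₗ[k] U ⊗[k] H) :
    ((H ⊗[k] H) ⊗[k] H) ⊗[k] (U ⊗[k] U) →ₗ[k] H :=
  LinearMap.mul' k H ∘ₗ
    TensorProduct.map
      (ract R ∘ₗ
        TensorProduct.map (HopfAlgebra.antipode (R := k) (A := H)) (lact R) ∘ₗ
        (TensorProduct.assoc k H H U).toLinearMap)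
      (ract R) ∘ₗ
    (TensorProduct.tensorTensorTensorComm k (H ⊗[k] H) H U U).toLinearMap

@[simp] theorem Phi2_tmul (R : H ⊗[k] U →ₗ[k] U ⊗[k] H)
    (x1 x2 x3 : H) (y1 y2 : U) :
    Phi2 R (((x1 ⊗ₜ[k] x2) ⊗ₜ[k] x3) ⊗ₜ[k] (y1 ⊗ₜ[k] y2)) =
      ract R (HopfAlgebra.antipode (R := k) (A := H) x1 ⊗ₜ[k] lact R (x2 ⊗ₜ[k] y1)) *
        ract R (x3 ⊗ₜ[k] y2) := by
  simp [Phi2]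

theorem key1 (R : H ⊗[k] U →ₗ[k] U ⊗[k] H) (hln : LeftNormal R)
    (hrm : RightMult R) (hcm : IsCoalgMap R) :
    conv (lact R) (T1 R) = cone := by
  apply TensorProduct.ext'; intro h u
  rw [conv_tmul _ _ h u (ℛ k h) (ℛ k u), cone_tmul]
  have stepA : ∑ i ∈ (ℛ k h).index, ∑ j ∈ (ℛ k u).index,
      lact R ((ℛ k h).left i ⊗ₜ[k] (ℛ k u).left j) *
        T1 R ((ℛ k h).right i ⊗ₜ[k] (ℛ k u).right j) =
      Phi R (Coalgebra.comul (R := k) h ⊗ₜ[k]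
        (Coalgebra.comul (R := k)).lTensor U (Coalgebra.comul (R := k) u)) := by
    rw [lT_comul_eq u (ℛ k u) (fun j => ℛ k ((ℛ k u).right j)), ← (ℛ k h).eq]
    simp only [TensorProduct.sum_tmul]
    simp only [TensorProduct.tmul_sum]
    simp only [map_sum, Phi_tmul]
    refine Finset.sum_congr rfl fun i _ => Finset.sum_congr rfl fun j _ => ?_
    rw [T1_tmul R _ _ (ℛ k ((ℛ k u).right j)), Finset.mul_sum]
  rw [stepA, ← Coalgebra.coassoc_apply,
    rT_comul_eq u (ℛ k u) (fun j => ℛ k ((ℛ k u).left j)), ← (ℛ k h).eq]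
  simp only [map_sum]
  simp only [TensorProduct.sum_tmul]
  simp only [TensorProduct.tmul_sum]
  simp only [map_sum, LinearEquiv.coe_coe, TensorProduct.assoc_tmul, Phi_tmul]
  rw [Finset.sum_comm]
  calc ∑ j ∈ (ℛ k u).index, ∑ i ∈ (ℛ k h).index,
        ∑ q ∈ (ℛ k ((ℛ k u).left j)).index,
          lact R ((ℛ k h).left i ⊗ₜ[k] (ℛ k ((ℛ k u).left j)).left q) *
            lact R (ract R ((ℛ k h).right i ⊗ₜ[k] (ℛ k ((ℛ k u).left j)).right q) ⊗ₜ[k]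
              HopfAlgebra.antipode (R := k) (A := U) ((ℛ k u).right j))
      = ∑ j ∈ (ℛ k u).index,
          lact R (h ⊗ₜ[k]
            ((ℛ k u).left j * HopfAlgebra.antipode (R := k) (A := U) ((ℛ k u).right j))) :=
        Finset.sum_congr rfl fun j _ =>
          (M1e R hrm hcm h ((ℛ k u).left j)
            (HopfAlgebra.antipode (R := k) (A := U) ((ℛ k u).right j))
            (ℛ k h) (ℛ k ((ℛ k u).left j))).symm
    _ = lact R (h ⊗ₜ[k] (∑ j ∈ (ℛ k u).index,
          (ℛ k u).left j * HopfAlgebra.antipode (R := k) (A := U) ((ℛ k u).right j))) := by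
        rw [TensorProduct.tmul_sum, map_sum]
    _ = lact R (h ⊗ₜ[k] algebraMap k U (Coalgebra.counit (R := k) u)) := by
        rw [HopfAlgebra.sum_mul_antipode_eq_algebraMap_counit (ℛ k u)]
    _ = Coalgebra.counit (R := k) u • lact R (h ⊗ₜ[k] (1 : U)) := by
        rw [Algebra.algebraMap_eq_smul_one, TensorProduct.tmul_smul, map_smul]
    _ = algebraMap k U (Coalgebra.counit (R := k) h * Coalgebra.counit (R := k) u) := by
        rw [lact_eq_laM, hln h, laM_tmul, smul_smul, mul_comm, Algebra.algebraMap_eq_smul_one]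

theorem key2 (R : H ⊗[k] U →ₗ[k] U ⊗[k] H) (hrn : RightNormal R)
    (hlm : LeftMult R) (hcm : IsCoalgMap R) :
    conv (G1 R) (ract R) = cone := by
  apply TensorProduct.ext'; intro h u
  rw [conv_tmul _ _ h u (ℛ k h) (ℛ k u), cone_tmul]
  have stepA : ∑ i ∈ (ℛ k h).index, ∑ j ∈ (ℛ k u).index,
      G1 R ((ℛ k h).left i ⊗ₜ[k] (ℛ k u).left j) *
        ract R ((ℛ k h).right i ⊗ₜ[k] (ℛ k u).right j) =
      Phi2 R ((Coalgebra.comul (R := k)).rTensor H (Coalgebra.comul (R := k) h) ⊗ₜ[k]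
        Coalgebra.comul (R := k) u) := by
    rw [rT_comul_eq h (ℛ k h) (fun i => ℛ k ((ℛ k h).left i)), ← (ℛ k u).eq]
    simp only [TensorProduct.sum_tmul]
    simp only [TensorProduct.tmul_sum]
    simp only [map_sum, Phi2_tmul]
    refine (Finset.sum_congr rfl fun i _ => ?_).trans
      (Finset.sum_congr rfl fun i _ => (Finset.sum_comm (s := (ℛ k u).index)
        (t := (ℛ k ((ℛ k h).left i)).index)))
    refine Finset.sum_congr rfl fun j _ => ?_
    rw [G1_tmul R _ _ (ℛ k ((ℛ k h).left i)), Finset.sum_mul]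
  rw [stepA, ← Coalgebra.coassoc_symm_apply,
    lT_comul_eq h (ℛ k h) (fun i => ℛ k ((ℛ k h).right i)), ← (ℛ k u).eq]
  simp only [map_sum]
  simp only [TensorProduct.sum_tmul]
  simp only [TensorProduct.tmul_sum]
  simp only [map_sum, LinearEquiv.coe_coe, TensorProduct.assoc_symm_tmul, Phi2_tmul]
  calc ∑ i ∈ (ℛ k h).index, ∑ p ∈ (ℛ k ((ℛ k h).right i)).index,
        ∑ j ∈ (ℛ k u).index,
          ract R (HopfAlgebra.antipode (R := k) (A := H) ((ℛ k h).left i) ⊗ₜ[k]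
            lact R ((ℛ k ((ℛ k h).right i)).left p ⊗ₜ[k] (ℛ k u).left j)) *
            ract R ((ℛ k ((ℛ k h).right i)).right p ⊗ₜ[k] (ℛ k u).right j)
      = ∑ i ∈ (ℛ k h).index,
          ract R ((HopfAlgebra.antipode (R := k) (A := H) ((ℛ k h).left i) *
            (ℛ k h).right i) ⊗ₜ[k] u) :=
        Finset.sum_congr rfl fun i _ =>
          (M2e R hlm hcm (HopfAlgebra.antipode (R := k) (A := H) ((ℛ k h).left i))
            ((ℛ k h).right i) u (ℛ k ((ℛ k h).right i)) (ℛ k u)).symm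
    _ = ract R ((∑ i ∈ (ℛ k h).index,
          HopfAlgebra.antipode (R := k) (A := H) ((ℛ k h).left i) * (ℛ k h).right i) ⊗ₜ[k] u) := by
        rw [TensorProduct.sum_tmul, map_sum]
    _ = ract R (algebraMap k H (Coalgebra.counit (R := k) h) ⊗ₜ[k] u) := by
        rw [HopfAlgebra.sum_antipode_mul_eq_algebraMap_counit (ℛ k h)]
    _ = Coalgebra.counit (R := k) h • ract R ((1 : H) ⊗ₜ[k] u) := by
        rw [Algebra.algebraMap_eq_smul_one, ← TensorProduct.smul_tmul', map_smul]
    _ = algebraMap k H (Coalgebra.counit (R := k) h * Coalgebra.counit (R := k) u) := by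
        rw [ract_eq_raM, hrn u, raM_tmul, smul_smul, Algebra.algebraMap_eq_smul_one]

end AuxFinal

/-- STATEMENT 12: for a normal, multiplicative coalgebra map `R : H ⊗ U → U ⊗ H`,
`S_U(h ▷ u) = (h ◁ u₍₁₎) ▷ S_U(u₍₂₎)` and `S_H(h ◁ u) = S_H(h₍₁₎) ◁ (h₍₂₎ ▷ u)`,
as equalities of linear maps `H ⊗ U → U` resp. `H ⊗ U → H`. -/
theorem antipode_actions (R : H ⊗[k] U →ₗ[k] U ⊗[k] H)
    (hln : LeftNormal R) (hrn : RightNormal R)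
    (hlm : LeftMult R) (hrm : RightMult R) (hcm : IsCoalgMap R) :
    (HopfAlgebra.antipode (R := k) (A := U) ∘ₗ lact R =
      lact R ∘ₗ
        TensorProduct.map (ract R) (HopfAlgebra.antipode (R := k) (A := U)) ∘ₗ
        (TensorProduct.assoc k H U U).symm.toLinearMap ∘ₗ
        TensorProduct.map (LinearMap.id : H →ₗ[k] H) (Coalgebra.comul (R := k))) ∧
    (HopfAlgebra.antipode (R := k) (A := H) ∘ₗ ract R =
      ract R ∘ₗ
        TensorProduct.map (HopfAlgebra.antipode (R := k) (A := H)) (lact R) ∘ₗ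
        (TensorProduct.assoc k H H U).toLinearMap ∘ₗ
        TensorProduct.map (Coalgebra.comul (R := k)) (LinearMap.id : U →ₗ[k] U)) := by
  constructor
  · have h1 : T1 R = HopfAlgebra.antipode (R := k) (A := U) ∘ₗ lact R := by
      calc T1 R = conv cone (T1 R) := (conv_one_left _).symm
        _ = conv (conv (HopfAlgebra.antipode (R := k) (A := U) ∘ₗ lact R) (lact R)) (T1 R) := by
            rw [conv_antipode_left (lact R) (comul_lact R hcm) (counit_lact R hcm)]
        _ = conv (HopfAlgebra.antipode (R := k) (A := U) ∘ₗ lact R) (conv (lact R) (T1 R)) :=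
            conv_assoc _ _ _
        _ = conv (HopfAlgebra.antipode (R := k) (A := U) ∘ₗ lact R) cone := by
            rw [key1 R hln hrm hcm]
        _ = HopfAlgebra.antipode (R := k) (A := U) ∘ₗ lact R := conv_one_right _
    exact h1.symm
  · have h2 : G1 R = HopfAlgebra.antipode (R := k) (A := H) ∘ₗ ract R := by
      calc G1 R = conv (G1 R) cone := (conv_one_right _).symm
        _ = conv (G1 R) (conv (ract R) (HopfAlgebra.antipode (R := k) (A := H) ∘ₗ ract R)) := by
            rw [conv_antipode_right (ract R) (comul_ract R hcm) (counit_ract R hcm)]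
        _ = conv (conv (G1 R) (ract R)) (HopfAlgebra.antipode (R := k) (A := H) ∘ₗ ract R) :=
            (conv_assoc _ _ _).symm
        _ = conv cone (HopfAlgebra.antipode (R := k) (A := H) ∘ₗ ract R) := by
            rw [key2 R hrn hlm hcm]
        _ = HopfAlgebra.antipode (R := k) (A := H) ∘ₗ ract R := conv_one_left _
    exact h2.symm
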